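/- In the binary-action setting, the direct signaling scheme π* defined by π*(1|ω) = 1 for ω < ω†, π*(1|ω†) = (−Σ_{j=1}^{ω†−1} μ(j)(v(0,j) − v(1,j)))/(μ(ω†)(v(0,ω†) − v(1,ω†))), and π*(1|ω) = 0 for ω > ω† (with π*(0|ω) = 1 − π*(1|ω)) is an optimal solution of the linear program: maximize Σ_ω μ(ω)(π(1|ω)u(1,ω) + π(0|ω)u(0,ω)) over all π with 0 ≤ π(1|ω) = 1 − π(0|ω) ≤ 1, subject to Σ_ω μ(ω)π(1|ω)(v(1,ω) − v(0,ω)) ≥ 0 and Σ_ω μ(ω)π(0|ω)(v(0,ω) − v(1,ω)) ≥ 0. In particular, π* is feasible for this program and attains its maximum. -/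

import Mathlib

open Finset

/-- Lemma 4, optimal signaling scheme in the binary-action case:
the greedy/threshold scheme `π*` (represented by `xstar ω = π*(1|ω)`) is feasible for
the persuasion linear program and attains its maximum.
States `{1,…,n}` are indexed by `Fin n` (`ω` corresponds to state `ω+1`), actions by
`Fin 2`; `nminus` is the number of states with `v(0,ω) − v(1,ω) ≤ 0` and `ωdag` is the
threshold state. -/
theorem binary_action_optimal_scheme
    {n : ℕ} (μ : Fin n → ℝ) (u v : Fin 2 → Fin n → ℝ)
    (nminus : ℕ) (ωdag : Fin n) (xstar : Fin n → ℝ)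
    (hμ0 : ∀ ω, 0 < μ ω) (hμ1 : ∑ ω, μ ω = 1)
    (hu : ∀ a ω, u a ω ∈ Set.Icc (0 : ℝ) 1)
    (hv : ∀ a ω, v a ω ∈ Set.Icc (0 : ℝ) 1)
    (hupref : ∀ ω, u 0 ω < u 1 ω)
    (hprior0 : 0 < ∑ ω, μ ω * (v 0 ω - v 1 ω))
    (hnminus : nminus ≤ n)
    (horder1 : ∀ ω : Fin n, v 0 ω - v 1 ω ≤ 0 ↔ (ω : ℕ) < nminus)
    (horder2 : ∀ ωi ωj : Fin n, nminus ≤ (ωi : ℕ) → ωi ≤ ωj →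
      (u 1 ωj - u 0 ωj) / (v 0 ωj - v 1 ωj) ≤ (u 1 ωi - u 0 ωi) / (v 0 ωi - v 1 ωi))
    (hωdag1 : 0 < ∑ j ∈ Finset.univ.filter (· ≤ ωdag), μ j * (v 0 j - v 1 j))
    (hωdag2 : ∀ ω < ωdag, (∑ j ∈ Finset.univ.filter (· ≤ ω), μ j * (v 0 j - v 1 j)) ≤ 0)
    (hxstar : ∀ ω, xstar ω =
      if ω < ωdag then 1
      else if ω = ωdag then
        (-(∑ j ∈ Finset.univ.filter (· < ωdag), μ j * (v 0 j - v 1 j))) /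
          (μ ωdag * (v 0 ωdag - v 1 ωdag))
      else 0) :
    ((∀ ω, xstar ω ∈ Set.Icc (0 : ℝ) 1) ∧
      0 ≤ ∑ ω, μ ω * xstar ω * (v 1 ω - v 0 ω) ∧
      0 ≤ ∑ ω, μ ω * (1 - xstar ω) * (v 0 ω - v 1 ω)) ∧
    (∀ x : Fin n → ℝ, (∀ ω, x ω ∈ Set.Icc (0 : ℝ) 1) →
      0 ≤ (∑ ω, μ ω * x ω * (v 1 ω - v 0 ω)) →
      0 ≤ (∑ ω, μ ω * (1 - x ω) * (v 0 ω - v 1 ω)) →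
      (∑ ω, μ ω * (x ω * u 1 ω + (1 - x ω) * u 0 ω)) ≤
        ∑ ω, μ ω * (xstar ω * u 1 ω + (1 - xstar ω) * u 0 ω)) := by
  classical
  -- abbreviations
  set S : ℝ := ∑ j ∈ Finset.univ.filter (· < ωdag), μ j * (v 0 j - v 1 j) with hSdef
  -- S ≤ 0
  have hS : S ≤ 0 := by
    rcases Nat.eq_zero_or_pos ωdag.val with h0 | hpos
    · have hempty : Finset.univ.filter (· < ωdag) = ∅ := by
        ext j
        simp only [mem_filter, mem_univ, true_and, Finset.notMem_empty, iff_false,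
          Fin.lt_def, h0]
        omega
      simp [hSdef, hempty]
    · have hlt : ωdag.val - 1 < n := lt_of_le_of_lt (Nat.sub_le _ _) ωdag.isLt
      set ω' : Fin n := ⟨ωdag.val - 1, hlt⟩ with hω'
      have heq : Finset.univ.filter (· ≤ ω') = Finset.univ.filter (· < ωdag) := by
        ext j
        simp only [mem_filter, mem_univ, true_and, Fin.le_def, Fin.lt_def, hω']
        omega
      have h := hωdag2 ω' (by simp only [Fin.lt_def, hω']; omega)
      rw [heq] at h
      exact h
  have hins : Finset.univ.filter (· ≤ ωdag) =
      insert ωdag (Finset.univ.filter (· < ωdag)) := by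
    ext j
    simp only [mem_filter, mem_univ, true_and, Finset.mem_insert, Fin.le_def, Fin.lt_def,
      Fin.ext_iff]
    omega
  have hnotmem : ωdag ∉ Finset.univ.filter (· < ωdag) := by simp
  have hωdag1' : 0 < μ ωdag * (v 0 ωdag - v 1 ωdag) + S := by
    rw [hins, Finset.sum_insert hnotmem] at hωdag1
    exact hωdag1
  have hdagpos : 0 < μ ωdag * (v 0 ωdag - v 1 ωdag) := by linarith
  have hDdag : 0 < v 0 ωdag - v 1 ωdag := by
    have := hμ0 ωdag
    nlinarith
  have hxdag_val : xstar ωdag = (-S) / (μ ωdag * (v 0 ωdag - v 1 ωdag)) := by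
    rw [hxstar ωdag, if_neg (lt_irrefl _), if_pos rfl]
  -- x* in [0,1]
  have hx01 : ∀ ω, xstar ω ∈ Set.Icc (0 : ℝ) 1 := by
    intro ω
    rcases lt_trichotomy ω ωdag with h | h | h
    · rw [hxstar ω, if_pos h]; exact ⟨zero_le_one, le_refl 1⟩
    · subst h
      rw [hxdag_val]
      constructor
      · exact div_nonneg (by linarith) hdagpos.le
      · rw [div_le_one hdagpos]; linarith
    · rw [hxstar ω, if_neg (not_lt_of_gt h), if_neg (ne_of_gt h)]
      exact ⟨le_refl 0, zero_le_one⟩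
  -- key identity: ∑ μ x* D = 0
  have hsum0 : ∑ ω, μ ω * xstar ω * (v 0 ω - v 1 ω) = 0 := by
    have h1 : ∑ ω, μ ω * xstar ω * (v 0 ω - v 1 ω)
        = (∑ ω ∈ Finset.univ.filter (· < ωdag), μ ω * xstar ω * (v 0 ω - v 1 ω))
          + ∑ ω ∈ Finset.univ.filter (fun ω => ¬ ω < ωdag),
              μ ω * xstar ω * (v 0 ω - v 1 ω) :=
      (Finset.sum_filter_add_sum_filter_not _ _ _).symm
    have h2 : ∑ ω ∈ Finset.univ.filter (· < ωdag), μ ω * xstar ω * (v 0 ω - v 1 ω) = S := by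
      rw [hSdef]
      apply Finset.sum_congr rfl
      intro ω hω
      simp only [mem_filter, mem_univ, true_and] at hω
      rw [hxstar ω, if_pos hω]
      ring
    have h3 : ∑ ω ∈ Finset.univ.filter (fun ω => ¬ ω < ωdag),
        μ ω * xstar ω * (v 0 ω - v 1 ω) = μ ωdag * xstar ωdag * (v 0 ωdag - v 1 ωdag) := by
      apply Finset.sum_eq_single_of_mem ωdag (by simp)
      intro ω hω hne
      simp only [mem_filter, mem_univ, true_and] at hω
      rw [hxstar ω, if_neg hω, if_neg hne]
      ring
    have h4 : μ ωdag * xstar ωdag * (v 0 ωdag - v 1 ωdag) = -S := by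
      rw [hxdag_val]
      field_simp
      rw [mul_div_cancel_left₀ S (hμ0 ωdag).ne']
    rw [h1, h2, h3, h4]
    ring
  -- rewriting lemma for sums with v1 - v0
  have hneg : ∀ y : Fin n → ℝ,
      ∑ ω, μ ω * y ω * (v 1 ω - v 0 ω) = -∑ ω, μ ω * y ω * (v 0 ω - v 1 ω) := by
    intro y
    rw [← Finset.sum_neg_distrib]
    apply Finset.sum_congr rfl
    intros; ring
  have hsub : ∀ y : Fin n → ℝ,
      ∑ ω, μ ω * (1 - y ω) * (v 0 ω - v 1 ω)
        = (∑ ω, μ ω * (v 0 ω - v 1 ω)) - ∑ ω, μ ω * y ω * (v 0 ω - v 1 ω) := by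
    intro y
    rw [← Finset.sum_sub_distrib]
    apply Finset.sum_congr rfl
    intros; ring
  refine ⟨⟨hx01, ?_, ?_⟩, ?_⟩
  · rw [hneg, hsum0]; simp
  · rw [hsub, hsum0]; linarith
  -- optimality
  intro x hx hx1 hx2
  have hxD : ∑ ω, μ ω * x ω * (v 0 ω - v 1 ω) ≤ 0 := by
    rw [hneg x] at hx1; linarith
  set lam : ℝ := (u 1 ωdag - u 0 ωdag) / (v 0 ωdag - v 1 ωdag) with hlam
  have hCdag : 0 < u 1 ωdag - u 0 ωdag := by have := hupref ωdag; linarith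
  have hlampos : 0 < lam := div_pos hCdag hDdag
  have hnmdag : nminus ≤ (ωdag : ℕ) := by
    by_contra hcon
    push_neg at hcon
    have := (horder1 ωdag).mpr hcon
    linarith
  have termwise : ∀ ω : Fin n,
      μ ω * x ω * ((u 1 ω - u 0 ω) - lam * (v 0 ω - v 1 ω))
        ≤ μ ω * xstar ω * ((u 1 ω - u 0 ω) - lam * (v 0 ω - v 1 ω)) := by
    intro ω
    have hμω := (hμ0 ω).le
    have hx0 := (hx ω).1
    have hx1' := (hx ω).2
    rcases lt_trichotomy ω ωdag with h | h | h
    · -- ω < ωdag : xstar = 1 and factor ≥ 0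
      have hxs : xstar ω = 1 := by rw [hxstar ω, if_pos h]
      have hfac : 0 ≤ (u 1 ω - u 0 ω) - lam * (v 0 ω - v 1 ω) := by
        by_cases hn : (ω : ℕ) < nminus
        · have hDω : v 0 ω - v 1 ω ≤ 0 := (horder1 ω).mpr hn
          have h1 : lam * (v 0 ω - v 1 ω) ≤ 0 :=
            mul_nonpos_of_nonneg_of_nonpos hlampos.le hDω
          have := hupref ω
          linarith
        · push_neg at hn
          have hDω : 0 < v 0 ω - v 1 ω :=
            lt_of_not_ge (fun hle => absurd ((horder1 ω).mp hle) (not_lt.mpr hn))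
          have h2 := horder2 ω ωdag hn (le_of_lt h)
          rw [← hlam] at h2
          have := (le_div_iff₀ hDω).mp h2
          linarith
      rw [hxs]
      nlinarith [mul_nonneg (mul_nonneg hμω (sub_nonneg.mpr hx1')) hfac]
    · -- ω = ωdag : factor = 0
      subst h
      have hfac : (u 1 ω - u 0 ω) - lam * (v 0 ω - v 1 ω) = 0 := by
        rw [hlam, div_mul_cancel₀ _ hDdag.ne']
        ring
      rw [hfac]
      simp
    · -- ω > ωdag : xstar = 0 and factor ≤ 0
      have hxs : xstar ω = 0 := by
        rw [hxstar ω, if_neg (not_lt_of_gt h), if_neg (ne_of_gt h)]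
      have hnω : nminus ≤ (ω : ℕ) := le_trans hnmdag (le_of_lt h)
      have hDω : 0 < v 0 ω - v 1 ω :=
        lt_of_not_ge (fun hle => absurd ((horder1 ω).mp hle) (not_lt.mpr hnω))
      have h2 := horder2 ωdag ω hnmdag (le_of_lt h)
      rw [← hlam] at h2
      have h3 := (div_le_iff₀ hDω).mp h2
      have hfac : (u 1 ω - u 0 ω) - lam * (v 0 ω - v 1 ω) ≤ 0 := by linarith
      rw [hxs]
      nlinarith [mul_nonpos_of_nonneg_of_nonpos (mul_nonneg hμω hx0) hfac]
  have hsum_le : ∑ ω, μ ω * x ω * ((u 1 ω - u 0 ω) - lam * (v 0 ω - v 1 ω))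
      ≤ ∑ ω, μ ω * xstar ω * ((u 1 ω - u 0 ω) - lam * (v 0 ω - v 1 ω)) :=
    Finset.sum_le_sum (fun ω _ => termwise ω)
  have expand : ∀ y : Fin n → ℝ,
      ∑ ω, μ ω * y ω * ((u 1 ω - u 0 ω) - lam * (v 0 ω - v 1 ω))
        = (∑ ω, μ ω * y ω * (u 1 ω - u 0 ω))
          - lam * ∑ ω, μ ω * y ω * (v 0 ω - v 1 ω) := by
    intro y
    rw [Finset.mul_sum, ← Finset.sum_sub_distrib]
    apply Finset.sum_congr rfl
    intros; ring
  rw [expand x, expand xstar, hsum0, mul_zero, sub_zero] at hsum_le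
  have hlamterm : lam * ∑ ω, μ ω * x ω * (v 0 ω - v 1 ω) ≤ 0 :=
    mul_nonpos_of_nonneg_of_nonpos hlampos.le hxD
  have hC_le : ∑ ω, μ ω * x ω * (u 1 ω - u 0 ω)
      ≤ ∑ ω, μ ω * xstar ω * (u 1 ω - u 0 ω) := by linarith
  have obj : ∀ y : Fin n → ℝ,
      ∑ ω, μ ω * (y ω * u 1 ω + (1 - y ω) * u 0 ω)
        = (∑ ω, μ ω * y ω * (u 1 ω - u 0 ω)) + ∑ ω, μ ω * u 0 ω := by
    intro y
    rw [← Finset.sum_add_distrib]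
    apply Finset.sum_congr rfl
    intros; ring
  rw [obj x, obj xstar]
  linarith
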